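/- Let ∂_S denote, for S ⊆ [n], the linear map on the space of multilinear polynomials in ℝ[x_1,…,x_n] determined on squarefree monomials by ∂_S(x_A) = x_{A\S} if S ⊆ A and ∂_S(x_A) = 0 otherwise. Then for every multilinear polynomial q ∈ ℝ[x_1,…,x_n], the polynomial Σ_{S⊆[n]} g_S·(∂_S q)² is multilinear and satisfies q² - Σ_{S⊆[n]} g_S·(∂_S q)² ∈ I_n; that is, Σ_{S⊆[n]} g_S·(∂_S q)² equals the multilinear reduction of q² modulo I_n. Moreover, if deg q ≤ d, then deg(g_S·(∂_S q)²) ≤ 2d for every S ⊆ [n]. -/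

import Mathlib

open MvPolynomial

/-- The exponent vector of the squarefree monomial `x_A`. -/
noncomputable def expOf {n : ℕ} (A : Finset (Fin n)) : Fin n →₀ ℕ :=
  ∑ i ∈ A, Finsupp.single i 1

/-- The squarefree monomial `x_A = ∏_{i ∈ A} x_i`. -/
noncomputable def sqfreeMon {n : ℕ} (A : Finset (Fin n)) : MvPolynomial (Fin n) ℝ :=
  ∏ i ∈ A, X i

/-- The linear map `∂_S` on multilinear polynomials, determined on squarefree
monomials by `∂_S(x_A) = x_{A \ S}` if `S ⊆ A` and `∂_S(x_A) = 0` otherwise. -/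
noncomputable def derS {n : ℕ} (S : Finset (Fin n)) (q : MvPolynomial (Fin n) ℝ) :
    MvPolynomial (Fin n) ℝ :=
  ∑ A ∈ Finset.univ.filter (fun A : Finset (Fin n) => S ⊆ A),
    C (q.coeff (expOf A)) * sqfreeMon (A \ S)

/-- The Boolean ideal `I_n = ⟨x_1² - x_1, …, x_n² - x_n⟩`. -/
noncomputable def booleanIdeal (n : ℕ) : Ideal (MvPolynomial (Fin n) ℝ) :=
  Ideal.span (Set.range fun i : Fin n => (X i) ^ 2 - X i)

lemma expOf_apply {n : ℕ} (A : Finset (Fin n)) (i : Fin n) :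
    expOf A i = if i ∈ A then 1 else 0 := by
  classical
  rw [expOf, Finset.sum_apply']
  simp_rw [Finsupp.single_apply]
  rw [Finset.sum_ite_eq' A i (fun _ => 1)]


lemma expOf_support {n : ℕ} (A : Finset (Fin n)) : (expOf A).support = A := by
  ext i
  simp [Finsupp.mem_support_iff, expOf_apply]


lemma expOf_le_one {n : ℕ} (A : Finset (Fin n)) (i : Fin n) : expOf A i ≤ 1 := by
  rw [expOf_apply]; split <;> omega


lemma sqfreeMon_eq_monomial {n : ℕ} (A : Finset (Fin n)) :
    sqfreeMon A = monomial (expOf A) 1 := by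
  classical
  induction A using Finset.induction_on with
  | empty => simp [sqfreeMon, expOf]
  | insert _ _ h ih =>
      rename_i a A
      rw [sqfreeMon, Finset.prod_insert h, ← sqfreeMon, ih,
        show expOf (insert a A) = Finsupp.single a 1 + expOf A from by
          rw [expOf, Finset.sum_insert h]; rfl,
        X, monomial_mul, one_mul]


lemma expOf_of_sqfree {n : ℕ} {m : Fin n →₀ ℕ} (hm : ∀ i, m i ≤ 1) :
    expOf m.support = m := by
  ext i
  rw [expOf_apply]
  by_cases h : i ∈ m.support
  · rw [if_pos h]
    have := Finsupp.mem_support_iff.mp h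
    have := hm i
    omega
  · rw [if_neg h]
    exact (Finsupp.notMem_support_iff.mp h).symm


lemma multilinear_expand {n : ℕ} {q : MvPolynomial (Fin n) ℝ} (hq : ∀ i, q.degreeOf i ≤ 1) :
    q = ∑ A : Finset (Fin n), C (q.coeff (expOf A)) * sqfreeMon A := by
  classical
  apply MvPolynomial.ext
  intro m
  rw [coeff_sum]
  simp_rw [sqfreeMon_eq_monomial, C_mul_monomial, mul_one, coeff_monomial]
  by_cases hm : ∀ i, m i ≤ 1
  · have heq : ∀ A : Finset (Fin n), (expOf A = m) ↔ (A = m.support) := by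
      intro A
      constructor
      · intro h; rw [← h, expOf_support]
      · intro h; rw [h, expOf_of_sqfree hm]
    simp_rw [heq]
    rw [Finset.sum_ite_eq' Finset.univ m.support (fun A => q.coeff (expOf A)),
      if_pos (Finset.mem_univ _), expOf_of_sqfree hm]
  · push_neg at hm
    obtain ⟨i, hi⟩ := hm
    have h1 : q.coeff m = 0 := by
      by_contra h
      have := monomial_le_degreeOf i (MvPolynomial.mem_support_iff.mpr h)
      have := hq i
      omega
    have h2 : ∀ A : Finset (Fin n), ¬ (expOf A = m) := by
      intro A hA
      have := expOf_le_one A i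
      rw [hA] at this
      omega
    rw [h1, Finset.sum_congr rfl (fun A _ => if_neg (h2 A)), Finset.sum_const_zero]


lemma card_le_of_coeff_ne_zero {n d : ℕ} {q : MvPolynomial (Fin n) ℝ} (hd : q.totalDegree ≤ d)
    {A : Finset (Fin n)} (h : q.coeff (expOf A) ≠ 0) : A.card ≤ d := by
  have hmem : expOf A ∈ q.support := MvPolynomial.mem_support_iff.mpr h
  have hle := le_totalDegree hmem
  have hsum : (expOf A).sum (fun _ e => e) = A.card := by
    rw [Finsupp.sum, expOf_support]
    rw [Finset.sum_congr rfl (fun i hi => by rw [expOf_apply, if_pos hi])]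
    simp
  omega


lemma totalDegree_sqfreeMon {n : ℕ} (A : Finset (Fin n)) :
    (sqfreeMon A).totalDegree ≤ A.card := by
  refine (totalDegree_finset_prod A _).trans ?_
  rw [Finset.sum_congr rfl (fun i _ => totalDegree_X i)]
  simp


lemma degreeOf_sqfreeMon {n : ℕ} (A : Finset (Fin n)) (i : Fin n) :
    (sqfreeMon A).degreeOf i ≤ 1 := by
  classical
  rw [sqfreeMon_eq_monomial, degreeOf_monomial_eq _ _ (one_ne_zero)]
  exact expOf_le_one A i


lemma sqfree_mul_disjoint {n : ℕ} {A B : Finset (Fin n)} (h : Disjoint A B) :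
    sqfreeMon (A ∪ B) = sqfreeMon A * sqfreeMon B := Finset.prod_union h


lemma sqfree_split {n : ℕ} {S A B : Finset (Fin n)} (hS : S ⊆ A ∩ B) :
    sqfreeMon (A \ S) * sqfreeMon (B \ S) =
      sqfreeMon (A \ B) * sqfreeMon (B \ A) * ∏ i ∈ (A ∩ B) \ S, (X i : MvPolynomial (Fin n) ℝ) ^ 2 := by
  classical
  have hA : A \ S = (A \ B) ∪ ((A ∩ B) \ S) := by
    ext i
    simp only [Finset.mem_sdiff, Finset.mem_union, Finset.mem_inter]
    constructor
    · rintro ⟨hiA, hiS⟩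
      by_cases hiB : i ∈ B
      · exact Or.inr ⟨⟨hiA, hiB⟩, hiS⟩
      · exact Or.inl ⟨hiA, hiB⟩
    · rintro (⟨hiA, hiB⟩ | ⟨⟨hiA, _⟩, hiS⟩)
      · exact ⟨hiA, fun hiS => hiB (Finset.mem_inter.mp (hS hiS)).2⟩
      · exact ⟨hiA, hiS⟩
  have hB : B \ S = (B \ A) ∪ ((A ∩ B) \ S) := by
    ext i
    simp only [Finset.mem_sdiff, Finset.mem_union, Finset.mem_inter]
    constructor
    · rintro ⟨hiB, hiS⟩
      by_cases hiA : i ∈ A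
      · exact Or.inr ⟨⟨hiA, hiB⟩, hiS⟩
      · exact Or.inl ⟨hiB, hiA⟩
    · rintro (⟨hiB, hiA⟩ | ⟨⟨_, hiB⟩, hiS⟩)
      · exact ⟨hiB, fun hiS => hiA (Finset.mem_inter.mp (hS hiS)).1⟩
      · exact ⟨hiB, hiS⟩
  have dA : Disjoint (A \ B) ((A ∩ B) \ S) := by
    rw [Finset.disjoint_left]
    intro i hi hi2
    exact (Finset.mem_sdiff.mp hi).2 (Finset.mem_inter.mp (Finset.mem_sdiff.mp hi2).1).2
  have dB : Disjoint (B \ A) ((A ∩ B) \ S) := by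
    rw [Finset.disjoint_left]
    intro i hi hi2
    exact (Finset.mem_sdiff.mp hi).2 (Finset.mem_inter.mp (Finset.mem_sdiff.mp hi2).1).1
  rw [hA, hB, sqfree_mul_disjoint dA, sqfree_mul_disjoint dB]
  have : ∀ T : Finset (Fin n), sqfreeMon T * sqfreeMon T = ∏ i ∈ T, (X i : MvPolynomial (Fin n) ℝ) ^ 2 := by
    intro T
    rw [sqfreeMon, ← Finset.prod_mul_distrib]
    exact Finset.prod_congr rfl fun i _ => (sq (X i)).symm
  rw [← this]
  ring


lemma sqfree_decomp {n : ℕ} (A B : Finset (Fin n)) :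
    sqfreeMon (A \ B) * sqfreeMon (B \ A) * sqfreeMon (A ∩ B) = sqfreeMon (A ∪ B) := by
  classical
  have h1 : Disjoint (A \ B) (B \ A) := by
    rw [Finset.disjoint_left]
    intro i hi hi2
    exact (Finset.mem_sdiff.mp hi2).2 (Finset.mem_sdiff.mp hi).1
  have h2 : Disjoint ((A \ B) ∪ (B \ A)) (A ∩ B) := by
    rw [Finset.disjoint_left]
    intro i hi hi2
    rcases Finset.mem_union.mp hi with h | h
    · exact (Finset.mem_sdiff.mp h).2 (Finset.mem_inter.mp hi2).2
    · exact (Finset.mem_sdiff.mp h).2 (Finset.mem_inter.mp hi2).1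
  have h3 : (A \ B) ∪ (B \ A) ∪ (A ∩ B) = A ∪ B := by
    ext i
    simp only [Finset.mem_union, Finset.mem_sdiff, Finset.mem_inter]
    tauto
  rw [← h3, sqfree_mul_disjoint h2, sqfree_mul_disjoint h1]


lemma innerSq_sum {n : ℕ} (A B : Finset (Fin n)) (a b : ℝ) :
    ∑ S : Finset (Fin n), (∏ i ∈ S, (X i - (X i : MvPolynomial (Fin n) ℝ) ^ 2)) *
      ((if S ⊆ A then C a * sqfreeMon (A \ S) else 0) *
       (if S ⊆ B then C b * sqfreeMon (B \ S) else 0)) =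
    C (a * b) * sqfreeMon (A ∪ B) := by
  classical
  have step1 : ∀ S : Finset (Fin n),
      (∏ i ∈ S, (X i - (X i : MvPolynomial (Fin n) ℝ) ^ 2)) *
        ((if S ⊆ A then C a * sqfreeMon (A \ S) else 0) *
         (if S ⊆ B then C b * sqfreeMon (B \ S) else 0)) =
      if S ∈ (A ∩ B).powerset then
        (C (a * b) * (sqfreeMon (A \ B) * sqfreeMon (B \ A))) *
          ((∏ i ∈ S, (X i - (X i : MvPolynomial (Fin n) ℝ) ^ 2)) *
            ∏ i ∈ (A ∩ B) \ S, (X i : MvPolynomial (Fin n) ℝ) ^ 2)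
      else 0 := by
    intro S
    by_cases h : S ∈ (A ∩ B).powerset
    · have hS : S ⊆ A ∩ B := Finset.mem_powerset.mp h
      rw [if_pos h, if_pos (hS.trans Finset.inter_subset_left),
        if_pos (hS.trans Finset.inter_subset_right)]
      have hsp := sqfree_split hS
      calc (∏ i ∈ S, (X i - (X i : MvPolynomial (Fin n) ℝ) ^ 2)) *
            ((C a * sqfreeMon (A \ S)) * (C b * sqfreeMon (B \ S)))
          = (C a * C b) * ((sqfreeMon (A \ S) * sqfreeMon (B \ S)) *
              (∏ i ∈ S, (X i - (X i : MvPolynomial (Fin n) ℝ) ^ 2))) := by ring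
        _ = _ := by rw [hsp, ← C_mul]; ring
    · rw [if_neg h]
      have hc : ¬ (S ⊆ A) ∨ ¬ (S ⊆ B) := by
        by_contra hc
        push_neg at hc
        exact h (Finset.mem_powerset.mpr (Finset.subset_inter hc.1 hc.2))
      rcases hc with h' | h'
      · rw [if_neg h', zero_mul, mul_zero]
      · rw [if_neg h', mul_zero, mul_zero]
  rw [Finset.sum_congr rfl fun S _ => step1 S, Finset.sum_ite_mem, Finset.univ_inter,
    ← Finset.mul_sum, ← Finset.prod_add]
  have hprod : ∏ i ∈ A ∩ B, ((X i - (X i : MvPolynomial (Fin n) ℝ) ^ 2) + (X i) ^ 2)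
      = sqfreeMon (A ∩ B) :=
    Finset.prod_congr rfl fun i _ => by ring
  rw [hprod, mul_assoc, sqfree_decomp]


lemma prod_idem_union {M ι : Type*} [CommMonoid M] [DecidableEq ι] (f : ι → M)
    (hf : ∀ i, f i * f i = f i) (A B : Finset ι) :
    (∏ i ∈ A, f i) * ∏ i ∈ B, f i = ∏ i ∈ A ∪ B, f i := by
  rw [← Finset.prod_union_inter]
  calc (∏ i ∈ A ∪ B, f i) * ∏ i ∈ A ∩ B, f i
      = ((∏ i ∈ (A ∪ B) \ (A ∩ B), f i) * ∏ i ∈ A ∩ B, f i) * ∏ i ∈ A ∩ B, f i := by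
        rw [Finset.prod_sdiff Finset.inter_subset_union]
    _ = (∏ i ∈ (A ∪ B) \ (A ∩ B), f i) * ∏ i ∈ A ∩ B, (f i * f i) := by
        rw [mul_assoc, ← Finset.prod_mul_distrib]
    _ = (∏ i ∈ (A ∪ B) \ (A ∩ B), f i) * ∏ i ∈ A ∩ B, f i := by
        rw [Finset.prod_congr rfl fun i _ => hf i]
    _ = ∏ i ∈ A ∪ B, f i := Finset.prod_sdiff Finset.inter_subset_union


lemma key_identity {n : ℕ} (q : MvPolynomial (Fin n) ℝ) :
    (∑ S : Finset (Fin n), (∏ i ∈ S, (X i - (X i) ^ 2)) * (derS S q) ^ 2) =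
    ∑ A : Finset (Fin n), ∑ B : Finset (Fin n),
      C (q.coeff (expOf A) * q.coeff (expOf B)) * sqfreeMon (A ∪ B) := by
  classical
  have hder : ∀ S : Finset (Fin n), derS S q =
      ∑ A : Finset (Fin n), if S ⊆ A then C (q.coeff (expOf A)) * sqfreeMon (A \ S) else 0 :=
    fun S => by rw [derS, Finset.sum_filter]
  calc ∑ S : Finset (Fin n), (∏ i ∈ S, (X i - (X i) ^ 2)) * (derS S q) ^ 2
      = ∑ S : Finset (Fin n), ∑ A : Finset (Fin n), ∑ B : Finset (Fin n),
          (∏ i ∈ S, (X i - (X i) ^ 2)) *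
            ((if S ⊆ A then C (q.coeff (expOf A)) * sqfreeMon (A \ S) else 0) *
             (if S ⊆ B then C (q.coeff (expOf B)) * sqfreeMon (B \ S) else 0)) := by
        refine Finset.sum_congr rfl fun S _ => ?_
        rw [hder S, sq, Finset.sum_mul_sum, Finset.mul_sum]
        exact Finset.sum_congr rfl fun A _ => by rw [Finset.mul_sum]
    _ = ∑ A : Finset (Fin n), ∑ B : Finset (Fin n), ∑ S : Finset (Fin n),
          (∏ i ∈ S, (X i - (X i) ^ 2)) *
            ((if S ⊆ A then C (q.coeff (expOf A)) * sqfreeMon (A \ S) else 0) *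
             (if S ⊆ B then C (q.coeff (expOf B)) * sqfreeMon (B \ S) else 0)) := by
        rw [Finset.sum_comm]
        exact Finset.sum_congr rfl fun A _ => Finset.sum_comm
    _ = _ := Finset.sum_congr rfl fun A _ => Finset.sum_congr rfl fun B _ =>
          innerSq_sum A B _ _

theorem boolean_square_lift (n d : ℕ) (q : MvPolynomial (Fin n) ℝ)
    (hq : ∀ i, q.degreeOf i ≤ 1) :
    (∀ i, (∑ S : Finset (Fin n),
        (∏ i ∈ S, (X i - (X i) ^ 2)) * (derS S q) ^ 2).degreeOf i ≤ 1) ∧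
    q ^ 2 - (∑ S : Finset (Fin n),
        (∏ i ∈ S, (X i - (X i) ^ 2)) * (derS S q) ^ 2) ∈ booleanIdeal n ∧
    (q.totalDegree ≤ d → ∀ S : Finset (Fin n),
      ((∏ i ∈ S, (X i - (X i) ^ 2)) * (derS S q) ^ 2).totalDegree ≤ 2 * d) := by
  classical
  have key := key_identity q
  refine ⟨?_, ?_, ?_⟩
  · intro i
    rw [key]
    refine (degreeOf_sum_le _ _ _).trans (Finset.sup_le fun A _ =>
      (degreeOf_sum_le _ _ _).trans (Finset.sup_le fun B _ => ?_))
    refine (degreeOf_mul_le _ _ _).trans ?_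
    rw [degreeOf_C]
    simpa using degreeOf_sqfreeMon (A ∪ B) i
  · rw [key]
    refine (Ideal.Quotient.eq).mp ?_
    have hX : ∀ i : Fin n,
        (Ideal.Quotient.mk (booleanIdeal n) (X i)) * (Ideal.Quotient.mk (booleanIdeal n) (X i))
          = Ideal.Quotient.mk (booleanIdeal n) (X i) := by
      intro i
      rw [← map_mul, ← sub_eq_zero, ← map_sub, Ideal.Quotient.eq_zero_iff_mem]
      have : (X i : MvPolynomial (Fin n) ℝ) * X i - X i = (X i) ^ 2 - X i := by ring
      rw [this]
      exact Ideal.subset_span ⟨i, rfl⟩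
    have hmk : ∀ A B : Finset (Fin n),
        Ideal.Quotient.mk (booleanIdeal n) (sqfreeMon A * sqfreeMon B)
          = Ideal.Quotient.mk (booleanIdeal n) (sqfreeMon (A ∪ B)) := by
      intro A B
      rw [map_mul, sqfreeMon, sqfreeMon, sqfreeMon, map_prod, map_prod, map_prod]
      exact prod_idem_union _ hX A B
    conv_lhs => rw [multilinear_expand hq]
    rw [sq, Finset.sum_mul_sum]
    rw [map_sum, map_sum]
    refine Finset.sum_congr rfl fun A _ => ?_
    rw [map_sum, map_sum]
    refine Finset.sum_congr rfl fun B _ => ?_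
    have : C (q.coeff (expOf A)) * sqfreeMon A * (C (q.coeff (expOf B)) * sqfreeMon B)
        = C (q.coeff (expOf A) * q.coeff (expOf B)) * (sqfreeMon A * sqfreeMon B) := by
      rw [C_mul]; ring
    rw [this, map_mul, hmk, ← map_mul]
  · intro hdq S
    by_cases hcard : S.card ≤ d
    · refine (totalDegree_mul _ _).trans ?_
      have h1 : (∏ i ∈ S, (X i - (X i : MvPolynomial (Fin n) ℝ) ^ 2)).totalDegree
          ≤ 2 * S.card := by
        refine (totalDegree_finset_prod _ _).trans ?_
        have hone : ∀ i : Fin n, (X i - (X i : MvPolynomial (Fin n) ℝ) ^ 2).totalDegree ≤ 2 := by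
          intro i
          rw [sub_eq_add_neg]
          refine (totalDegree_add _ _).trans (max_le ?_ ?_)
          · rw [totalDegree_X]; omega
          · rw [totalDegree_neg]
            exact (totalDegree_pow _ _).trans (by rw [totalDegree_X])
        refine le_trans (Finset.sum_le_sum (g := fun _ => 2) fun i _ => hone i) ?_
        rw [Finset.sum_const, smul_eq_mul, mul_comm]
      have h2 : (derS S q).totalDegree ≤ d - S.card := by
        rw [derS]
        refine totalDegree_finsetSum_le fun A hA => ?_
        by_cases hcA : q.coeff (expOf A) = 0
        · rw [hcA]; simp
        · have hAd := card_le_of_coeff_ne_zero hdq hcA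
          have hSA : S ⊆ A := (Finset.mem_filter.mp hA).2
          refine (totalDegree_mul _ _).trans ?_
          rw [totalDegree_C, zero_add]
          refine (totalDegree_sqfreeMon _).trans ?_
          rw [Finset.card_sdiff_of_subset hSA]
          omega
      have h3 : ((derS S q) ^ 2).totalDegree ≤ 2 * (d - S.card) :=
        (totalDegree_pow _ _).trans (by omega)
      calc (∏ i ∈ S, (X i - (X i) ^ 2) : MvPolynomial (Fin n) ℝ).totalDegree
            + ((derS S q) ^ 2).totalDegree
          ≤ 2 * S.card + 2 * (d - S.card) := add_le_add h1 h3
        _ ≤ 2 * d := by omega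
    · have hzero : derS S q = 0 := by
        rw [derS]
        refine Finset.sum_eq_zero fun A hA => ?_
        have hSA : S ⊆ A := (Finset.mem_filter.mp hA).2
        have hz : q.coeff (expOf A) = 0 := by
          by_contra h
          have := card_le_of_coeff_ne_zero hdq h
          have := Finset.card_le_card hSA
          omega
        rw [hz, map_zero, zero_mul]
      rw [hzero]
      simp
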